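/- A *-ring A is n-proper if and only if the matrix *-ring M_n(A) with the *-transpose involution is proper (i.e., 1-proper). Consequently, A is positive definite if and only if M_n(A) is positive definite for every n. -/

import Mathlib

/-- A `*`-ring is `n`-proper if `Σᵢ xᵢ xᵢ* = 0` implies that all `xᵢ = 0`. -/
def IsNProper (A : Type*) [Ring A] [StarRing A] (n : ℕ) : Prop :=
  ∀ x : Fin n → A, ∑ i, x i * star (x i) = 0 → ∀ i, x i = 0

lemma proper_fintype {A : Type*} [Ring A] [StarRing A] (hA : ∀ n, IsNProper A n)
    {ι : Type*} [Fintype ι] (f : ι → A) (hf : ∑ i, f i * star (f i) = 0) : ∀ i, f i = 0 := by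
  let e := Fintype.equivFin ι
  have hsum : ∑ k, (f ∘ e.symm) k * star ((f ∘ e.symm) k) = 0 := by
    have := e.symm.sum_comp (fun i => f i * star (f i))
    simpa [Function.comp] using this.trans hf
  intro i
  have := hA (Fintype.card ι) (f ∘ e.symm) hsum (e i)
  simpa using this

/-- A `*`-ring `A` is `n`-proper if and only if the matrix `*`-ring
`Mₙ(A)` (with the `*`-transpose involution) is proper, i.e. `1`-proper.  Consequently `A` is
positive definite if and only if `Mₙ(A)` is positive definite for every `n`. -/
theorem stmt_13 {A : Type*} [Ring A] [StarRing A] :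
    (∀ n : ℕ, IsNProper A n ↔ IsNProper (Matrix (Fin n) (Fin n) A) 1) ∧
    ((∀ n : ℕ, IsNProper A n) ↔ ∀ n m : ℕ, IsNProper (Matrix (Fin n) (Fin n) A) m) := by
  have rev : ∀ n : ℕ, IsNProper (Matrix (Fin n) (Fin n) A) 1 → IsNProper A n := by
    intro n h x hx i
    set M : Matrix (Fin n) (Fin n) A := fun _ c => x c with hMdef
    have hM : ∑ k : Fin 1, (fun _ : Fin 1 => M) k * star ((fun _ : Fin 1 => M) k) = 0 := by
      simp only [Fin.sum_univ_one]
      ext r c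
      have : (M * star M) r c = ∑ j, x j * star (x j) := by
        simp only [Matrix.mul_apply, Matrix.star_apply]
        simp [hMdef]
      simp [this, hx]
    have := h (fun _ => M) hM 0
    have := congrFun (congrFun this i) i
    simpa [hMdef] using this
  have fwd : (∀ n : ℕ, IsNProper A n) → ∀ n m : ℕ, IsNProper (Matrix (Fin n) (Fin n) A) m := by
    intro hA n m X hX k
    ext r c
    have h0 : ∑ p : Fin m × Fin n, X p.1 r p.2 * star (X p.1 r p.2) = 0 := by
      have := congrFun (congrFun hX r) r
      simpa [Matrix.sum_apply, Matrix.mul_apply, Matrix.star_apply,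
        Fintype.sum_prod_type] using this
    have := proper_fintype hA _ h0 (k, c)
    simpa using this
  refine ⟨fun n => ⟨fun h => ?_, rev n⟩, fun hA => fwd hA, fun h n => rev n (h n 1)⟩
  intro x hx i
  have hM : x 0 * star (x 0) = 0 := by simpa [Fin.sum_univ_one] using hx
  have hz : x 0 = 0 := by
    ext r c
    have hd : ∑ j, x 0 r j * star (x 0 r j) = 0 := by
      have := congrFun (congrFun hM r) r
      simpa [Matrix.mul_apply, Matrix.star_apply] using this
    simpa using h (fun j => x 0 r j) hd c
  have : i = 0 := Subsingleton.elim i 0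
  rw [this, hz]
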